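/- Let A be a real symmetric tensor of even order k and dimension n, and let λ_min(A) be its least H-eigenvalue. Then A is positive semidefinite (i.e., A x^k ≥ 0 for all x ∈ ℝ^n) if and only if λ_min(A) ≥ 0, and A is positive definite (A x^k > 0 for all x ≠ 0) if and only if λ_min(A) > 0. -/

import Mathlib

open Finset BigOperators

/-- The value `A x^k = ∑ a_{i1...ik} x_{i1} ⋯ x_{ik}` of a tensor on a vector. -/
def tApply {n k : ℕ} (A : (Fin k → Fin n) → ℝ) (x : Fin n → ℝ) : ℝ :=
  ∑ f : Fin k → Fin n, A f * ∏ j, x (f j)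

/-- A tensor is symmetric if its entries are invariant under permutations of the indices. -/
def SymT {n k : ℕ} (A : (Fin k → Fin n) → ℝ) : Prop :=
  ∀ (σ : Equiv.Perm (Fin k)) (f : Fin k → Fin n), A (f ∘ σ) = A f

/-- The H-eigenvector equation `(A x^{k-1})_i = lam * x_i^{k-1}` for all `i`. -/
def tEig {n k : ℕ} [NeZero k] (A : (Fin k → Fin n) → ℝ) (lam : ℝ) (x : Fin n → ℝ) : Prop :=
  ∀ i : Fin n,
    (∑ f : Fin k → Fin n,
      if f 0 = i then A f * ∏ j ∈ Finset.univ.erase (0 : Fin k), x (f j) else 0)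
    = lam * x i ^ (k - 1)

/-- The set of H-eigenvalues of a tensor. -/
def specT {n k : ℕ} [NeZero k] (A : (Fin k → Fin n) → ℝ) : Set ℝ :=
  {lam | ∃ x : Fin n → ℝ, x ≠ 0 ∧ tEig A lam x}

/-- The least H-eigenvalue of a tensor. -/
noncomputable def lamMinT {n k : ℕ} [NeZero k] (A : (Fin k → Fin n) → ℝ) : ℝ :=
  sInf (specT A)

/-- the i-th component of A x^{k-1} -/
def tGrad {n k : ℕ} [NeZero k] (A : (Fin k → Fin n) → ℝ) (x : Fin n → ℝ) (i : Fin n) : ℝ :=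
  ∑ f : Fin k → Fin n,
      if f 0 = i then A f * ∏ j ∈ Finset.univ.erase (0 : Fin k), x (f j) else 0

def nrm {n : ℕ} (k : ℕ) (x : Fin n → ℝ) : ℝ := ∑ i, x i ^ k

lemma nrm_smul {n k : ℕ} (c : ℝ) (x : Fin n → ℝ) : nrm k (c • x) = c ^ k * nrm k x := by
  simp [nrm, mul_pow, Finset.mul_sum]

lemma tApply_smul {n k : ℕ} (A : (Fin k → Fin n) → ℝ) (c : ℝ) (x : Fin n → ℝ) :
    tApply A (c • x) = c ^ k * tApply A x := by
  unfold tApply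
  rw [Finset.mul_sum]
  refine Finset.sum_congr rfl fun f _ => ?_
  simp only [Pi.smul_apply, smul_eq_mul, Finset.prod_mul_distrib, Finset.prod_const,
    Finset.card_univ, Fintype.card_fin]
  ring

lemma trace_eq {n k : ℕ} [NeZero k] (A : (Fin k → Fin n) → ℝ) (x : Fin n → ℝ) :
    ∑ i, tGrad A x i * x i = tApply A x := by
  unfold tGrad tApply
  simp only [Finset.sum_mul, ite_mul, zero_mul]
  rw [Finset.sum_comm]
  refine Finset.sum_congr rfl fun f _ => ?_
  rw [Finset.sum_ite_eq (Finset.univ : Finset (Fin n)) (f 0)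
    (fun i => A f * (∏ j ∈ Finset.univ.erase (0 : Fin k), x (f j)) * x i)]
  simp only [Finset.mem_univ, if_true]
  rw [mul_assoc, mul_comm _ (x (f 0)), Finset.mul_prod_erase Finset.univ (fun j => x (f j)) (Finset.mem_univ (0:Fin k))]

lemma tApply_zero {n k : ℕ} [NeZero k] (A : (Fin k → Fin n) → ℝ) : tApply A 0 = 0 := by
  unfold tApply
  refine Finset.sum_eq_zero fun f _ => ?_
  rw [Finset.prod_eq_zero (Finset.mem_univ (0 : Fin k)) (by simp), mul_zero]

lemma nrm_pos {n k : ℕ} [NeZero k] (hk : Even k) {x : Fin n → ℝ} (hx : x ≠ 0) :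
    0 < nrm k x := by
  obtain ⟨i, hi⟩ := Function.ne_iff.1 hx
  refine Finset.sum_pos' (fun j _ => hk.pow_nonneg _) ⟨i, Finset.mem_univ i, ?_⟩
  exact hk.pow_pos hi

/-- swap invariance of the slice sums -/
lemma slice_swap {n k : ℕ} [NeZero k] (A : (Fin k → Fin n) → ℝ) (hA : SymT A)
    (x : Fin n → ℝ) (i : Fin n) (j : Fin k) :
    ∑ f : Fin k → Fin n,
      (if f j = i then A f * ∏ l ∈ Finset.univ.erase j, x (f l) else 0)
    = tGrad A x i := by
  unfold tGrad
  set σ : Equiv.Perm (Fin k) := Equiv.swap (0 : Fin k) j with hσ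
  have hbij : Function.Bijective (fun f : Fin k → Fin n => f ∘ σ) :=
    (Equiv.arrowCongr σ.symm (Equiv.refl (Fin n))).bijective
  refine (Fintype.sum_bijective _ hbij _ _ fun f => ?_).symm
  have h0 : (f ∘ σ) j = f 0 := by simp [hσ, Equiv.swap_apply_right]
  rw [h0, hA σ f]
  by_cases hfi : f 0 = i
  · simp only [hfi, if_true]
    congr 1
    refine Finset.prod_bij' (fun l _ => σ l) (fun l _ => σ l) ?_ ?_ ?_ ?_ ?_
    · intro l hl
      simp only [Finset.mem_erase, Finset.mem_univ, and_true] at hl ⊢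
      intro h; apply hl; rwa [← Equiv.swap_apply_left (0:Fin k) j, hσ, Equiv.injective σ |>.eq_iff] at h
    · intro l hl
      simp only [Finset.mem_erase, Finset.mem_univ, and_true] at hl ⊢
      intro h; apply hl; rwa [← Equiv.swap_apply_right (0:Fin k) j, hσ, Equiv.injective σ |>.eq_iff] at h
    · intro l _; simp [hσ]
    · intro l _; simp [hσ]
    · intro l _; simp [hσ, Equiv.swap_apply_self]
  · simp [hfi]

lemma deriv_tApply {n k : ℕ} [NeZero k] (A : (Fin k → Fin n) → ℝ) (hA : SymT A)
    (x : Fin n → ℝ) (i : Fin n) :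
    HasDerivAt (fun t : ℝ => tApply A (x + t • (Pi.single i 1 : Fin n → ℝ)))
      ((k : ℝ) * tGrad A x i) 0 := by
  set e : Fin n → ℝ := Pi.single i 1 with he
  have key : ∀ f : Fin k → Fin n, HasDerivAt
      (fun t : ℝ => A f * ∏ l : Fin k, (x (f l) + t * e (f l)))
      (A f * ∑ l : Fin k, (∏ m ∈ Finset.univ.erase l, x (f m)) * e (f l)) 0 := by
    intro f
    have hp : HasDerivAt (fun t : ℝ => ∏ l : Fin k, (x (f l) + t * e (f l)))
        (∑ l : Fin k, (∏ m ∈ Finset.univ.erase l, (x (f m) + 0 * e (f m))) • e (f l)) 0 := by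
      refine HasDerivAt.fun_finsetProd fun l _ => ?_
      simpa using ((hasDerivAt_id (0:ℝ)).mul_const (e (f l))).const_add (x (f l))
    simp only [zero_mul, add_zero, smul_eq_mul] at hp
    exact hp.const_mul (A f)
  have hsum : HasDerivAt (fun t : ℝ => ∑ f : Fin k → Fin n,
      A f * ∏ l : Fin k, (x (f l) + t * e (f l)))
      (∑ f : Fin k → Fin n, A f * ∑ l : Fin k,
        (∏ m ∈ Finset.univ.erase l, x (f m)) * e (f l)) 0 :=
    HasDerivAt.fun_sum fun f _ => key f
  have heq : (fun t : ℝ => ∑ f : Fin k → Fin n,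
      A f * ∏ l : Fin k, (x (f l) + t * e (f l))) =
      fun t : ℝ => tApply A (x + t • (Pi.single i 1 : Fin n → ℝ)) := by
    funext t
    unfold tApply
    refine Finset.sum_congr rfl fun f _ => ?_
    simp [he]
  rw [heq] at hsum
  convert hsum using 1
  have : ∀ f : Fin k → Fin n, A f * ∑ l : Fin k,
      (∏ m ∈ Finset.univ.erase l, x (f m)) * e (f l)
      = ∑ l : Fin k, (if f l = i then A f * ∏ m ∈ Finset.univ.erase l, x (f m) else 0) := by
    intro f
    rw [Finset.mul_sum]
    refine Finset.sum_congr rfl fun l _ => ?_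
    simp only [he, Pi.single_apply]
    by_cases h : f l = i <;> simp [h, mul_comm]
  simp only [this]
  rw [Finset.sum_comm]
  rw [Finset.sum_congr rfl fun l _ => slice_swap A hA x i l]
  simp [Finset.card_univ, mul_comm]

lemma deriv_nrm {n k : ℕ} [NeZero k] (x : Fin n → ℝ) (i : Fin n) :
    HasDerivAt (fun t : ℝ => nrm k (x + t • (Pi.single i 1 : Fin n → ℝ)))
      ((k : ℝ) * x i ^ (k - 1)) 0 := by
  set e : Fin n → ℝ := Pi.single i 1 with he
  have key : ∀ j : Fin n, HasDerivAt (fun t : ℝ => (x j + t * e j) ^ k)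
      ((k : ℝ) * (x j + 0 * e j) ^ (k - 1) * e j) 0 := by
    intro j
    exact (((hasDerivAt_id (0:ℝ)).mul_const (e j)).const_add (x j)).pow k |>.congr_deriv
      (by simp)
  have hsum := HasDerivAt.fun_sum (fun j (_ : j ∈ Finset.univ) => key j)
  have h2 : (∑ j : Fin n, (k : ℝ) * (x j + 0 * e j) ^ (k - 1) * e j)
      = (k : ℝ) * x i ^ (k - 1) := by
    simp only [zero_mul, add_zero, he, Pi.single_apply, mul_ite, mul_one, mul_zero, ite_self]
    rw [Finset.sum_ite_eq' Finset.univ i (fun j => (k : ℝ) * x j ^ (k - 1))]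
    simp
  rw [h2] at hsum
  have h3 : (fun t : ℝ => nrm k (x + t • (Pi.single i 1 : Fin n → ℝ)))
      = fun t : ℝ => ∑ j : Fin n, (x j + t * e j) ^ k := by
    funext t; simp [nrm, he]
  rw [h3]
  exact hsum

lemma tApply_continuous {n k : ℕ} (A : (Fin k → Fin n) → ℝ) : Continuous (tApply A) := by
  unfold tApply
  exact continuous_finset_sum _ fun f _ =>
    continuous_const.mul (continuous_finset_prod _ fun j _ => continuous_apply (f j))

lemma exists_min {n k : ℕ} [NeZero k] (hk : Even k) (hn : 0 < n)
    (A : (Fin k → Fin n) → ℝ) :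
    ∃ x0 : Fin n → ℝ, nrm k x0 = 1 ∧ ∀ x, nrm k x = 1 → tApply A x0 ≤ tApply A x := by
  have hk0 : k ≠ 0 := NeZero.ne k
  set S : Set (Fin n → ℝ) := {x | nrm k x = 1} with hS
  have hne : S.Nonempty := by
    refine ⟨Pi.single ⟨0, hn⟩ 1, ?_⟩
    simp only [hS, Set.mem_setOf_eq, nrm, Pi.single_apply]
    rw [Finset.sum_congr rfl fun j _ => by
      rw [show ((if j = ⟨0, hn⟩ then (1:ℝ) else 0) ^ k) = if j = ⟨0, hn⟩ then 1 else 0 by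
        split <;> simp [zero_pow hk0]]]
    simp
  have hclosed : IsClosed S := isClosed_eq (by
    exact continuous_finset_sum _ fun i _ => (continuous_apply i).pow k) continuous_const
  have hsub : S ⊆ Metric.closedBall 0 1 := by
    intro x hx
    simp only [Metric.mem_closedBall, dist_zero_right]
    rw [pi_norm_le_iff_of_nonneg zero_le_one]
    intro i
    rw [Real.norm_eq_abs]
    by_contra h
    push_neg at h
    have h1 : (1:ℝ) < |x i| ^ k := one_lt_pow₀ h hk0
    have h2 : |x i| ^ k ≤ nrm k x := by
      rw [hk.pow_abs]
      exact Finset.single_le_sum (fun j _ => hk.pow_nonneg (x j)) (Finset.mem_univ i)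
    rw [hx] at h2; linarith
  have hcompact : IsCompact S :=
    (isCompact_closedBall 0 1).of_isClosed_subset hclosed hsub
  obtain ⟨x0, hx0, hmin⟩ := hcompact.exists_isMinOn hne (tApply_continuous A).continuousOn
  exact ⟨x0, hx0, fun x hx => hmin hx⟩

lemma global_bound {n k : ℕ} [NeZero k] (hk : Even k) {A : (Fin k → Fin n) → ℝ}
    {x0 : Fin n → ℝ} (hx0 : nrm k x0 = 1)
    (hmin : ∀ x, nrm k x = 1 → tApply A x0 ≤ tApply A x) (x : Fin n → ℝ) :
    tApply A x0 * nrm k x ≤ tApply A x := by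
  have hk0 : k ≠ 0 := NeZero.ne k
  by_cases hx : x = 0
  · subst hx
    rw [tApply_zero]
    have : nrm k (0 : Fin n → ℝ) = 0 := by simp [nrm, zero_pow hk0]
    rw [this, mul_zero]
  · have hs : 0 < nrm k x := nrm_pos hk hx
    set t : ℝ := (nrm k x) ^ ((k : ℝ)⁻¹) with ht
    have htpos : 0 < t := Real.rpow_pos_of_pos hs _
    have htk : t ^ k = nrm k x := Real.rpow_inv_natCast_pow hs.le hk0
    have hy : nrm k (t⁻¹ • x) = 1 := by
      rw [nrm_smul, inv_pow, htk, inv_mul_cancel₀ hs.ne']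
    have := hmin _ hy
    rw [tApply_smul, inv_pow, htk] at this
    calc tApply A x0 * nrm k x ≤ ((nrm k x)⁻¹ * tApply A x) * nrm k x := by
          exact mul_le_mul_of_nonneg_right this hs.le
      _ = tApply A x := by field_simp

lemma min_is_eig {n k : ℕ} [NeZero k] (hk : Even k) {A : (Fin k → Fin n) → ℝ}
    (hA : SymT A) {x0 : Fin n → ℝ} (hx0 : nrm k x0 = 1)
    (hmin : ∀ x, nrm k x = 1 → tApply A x0 ≤ tApply A x) :
    tEig A (tApply A x0) x0 := by
  have hk0 : k ≠ 0 := NeZero.ne k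
  set m : ℝ := tApply A x0 with hm
  intro i
  set φ : ℝ → ℝ := fun t => tApply A (x0 + t • (Pi.single i 1 : Fin n → ℝ))
      - m * nrm k (x0 + t • (Pi.single i 1 : Fin n → ℝ)) with hφ
  have hφ0 : φ 0 = 0 := by simp [hφ, hx0, hm]
  have hlb : ∀ t, φ 0 ≤ φ t := by
    intro t
    rw [hφ0]
    have := global_bound hk hx0 hmin (x0 + t • (Pi.single i 1 : Fin n → ℝ))
    simp only [hφ]
    linarith
  have hloc : IsLocalMin φ 0 := Filter.Eventually.of_forall hlb
  have hder : HasDerivAt φ ((k : ℝ) * tGrad A x0 i - m * ((k : ℝ) * x0 i ^ (k - 1))) 0 :=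
    (deriv_tApply A hA x0 i).sub ((deriv_nrm x0 i).const_mul m)
  have hzero := hloc.hasDerivAt_eq_zero hder
  have hkne : (k : ℝ) ≠ 0 := Nat.cast_ne_zero.mpr hk0
  have : (k : ℝ) * (tGrad A x0 i - m * x0 i ^ (k - 1)) = 0 := by ring_nf; ring_nf at hzero; linarith
  have h2 : tGrad A x0 i - m * x0 i ^ (k - 1) = 0 := by
    rcases mul_eq_zero.1 this with h | h
    · exact absurd h hkne
    · exact h
  have h3 : tGrad A x0 i = m * x0 i ^ (k - 1) := by linarith
  exact h3

lemma eig_value {n k : ℕ} [NeZero k] {A : (Fin k → Fin n) → ℝ} {lam : ℝ}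
    {x : Fin n → ℝ} (hx : tEig A lam x) : tApply A x = lam * nrm k x := by
  have hk0 : k ≠ 0 := NeZero.ne k
  rw [← trace_eq]
  have : ∀ i : Fin n, tGrad A x i * x i = lam * x i ^ k := by
    intro i
    rw [show tGrad A x i = lam * x i ^ (k - 1) from hx i, mul_assoc,
      ← pow_succ, show k - 1 + 1 = k from Nat.succ_pred_eq_of_pos (Nat.pos_of_ne_zero hk0)]
  rw [Finset.sum_congr rfl fun i _ => this i, ← Finset.mul_sum]
  rfl

/-- A real symmetric tensor of even order is positive semidefinite iff its least
H-eigenvalue is nonnegative, and positive definite iff it is positive. -/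
theorem stmt11 {n k : ℕ} [NeZero k] (hk : Even k) (hn : 0 < n)
    (A : (Fin k → Fin n) → ℝ) (hA : SymT A) :
    ((∀ x : Fin n → ℝ, 0 ≤ tApply A x) ↔ 0 ≤ lamMinT A) ∧
    ((∀ x : Fin n → ℝ, x ≠ 0 → 0 < tApply A x) ↔ 0 < lamMinT A) := by
  have hk0 : k ≠ 0 := NeZero.ne k
  obtain ⟨x0, hx0, hmin⟩ := exists_min hk hn A
  set m : ℝ := tApply A x0 with hm
  have hx0ne : x0 ≠ 0 := by
    intro h
    rw [h] at hx0
    simp [nrm, zero_pow hk0] at hx0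
  have hmem : m ∈ specT A := ⟨x0, hx0ne, min_is_eig hk hA hx0 hmin⟩
  have hlb : ∀ lam ∈ specT A, m ≤ lam := by
    rintro lam ⟨x, hxne, hx⟩
    have h1 := eig_value hx
    have h2 := global_bound hk hx0 hmin x
    have h3 : 0 < nrm k x := nrm_pos hk hxne
    rw [h1] at h2
    exact le_of_mul_le_mul_right h2 h3
  have hinf : lamMinT A = m := (IsLeast.csInf_eq ⟨hmem, hlb⟩ : sInf (specT A) = m)
  rw [hinf]
  constructor
  · constructor
    · intro h
      exact h x0
    · intro h x
      have := global_bound hk hx0 hmin x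
      have hnn : 0 ≤ nrm k x := Finset.sum_nonneg fun i _ => hk.pow_nonneg _
      nlinarith
  · constructor
    · intro h
      exact h x0 hx0ne
    · intro h x hx
      have := global_bound hk hx0 hmin x
      have hp : 0 < nrm k x := nrm_pos hk hx
      nlinarith
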